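/- arXiv:2007.13818 — 2 statements merged into one kernel-verified Lean document; each statement's English description precedes it below -/
import Mathlib

section
/- Let ρ be a positive definite density operator on an r-dimensional Hilbert space with eigenvalues λ_1 ≤ … ≤ λ_r (all positive). Let X be a Hermitian operator with eigenvalues x_1 ≤ … ≤ x_r satisfying x_1 ≥ −1 and tr(ρX) ≤ 0. Then x_r ≤ (r−1)·λ_r/λ_1. -/
open Matrix BigOperators ComplexOrder

private lemma aux_diag_re_nonneg {r : ℕ} {M : Matrix (Fin r) (Fin r) ℂ} (hM : M.PosSemidef)
    (j : Fin r) : 0 ≤ (M j j).re := by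
  have := hM.re_dotProduct_nonneg (Pi.single j 1)
  simpa [dotProduct, mulVec, Pi.single_apply] using this

private lemma aux_sub_smul_posSemidef {r : ℕ} {ρ : Matrix (Fin r) (Fin r) ℂ} (hρ : ρ.PosDef)
    {c : ℝ} (hc : ∀ j, c ≤ hρ.1.eigenvalues j) : (ρ - c • 1).PosSemidef := by
  set V : Matrix (Fin r) (Fin r) ℂ := (hρ.1.eigenvectorUnitary : Matrix (Fin r) (Fin r) ℂ) with hV
  have hVs : V * star V = 1 := (Matrix.mem_unitaryGroup_iff).mp hρ.1.eigenvectorUnitary.2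
  have key : ρ - c • 1 = V * (diagonal (RCLike.ofReal ∘ hρ.1.eigenvalues) - (c:ℂ) • 1) * star V := by
    rw [Matrix.mul_sub, Matrix.sub_mul, Matrix.mul_smul, mul_one, Matrix.smul_mul, hVs]
    rw [hV, ← Unitary.conjStarAlgAut_apply (S := ℂ), ← hρ.1.spectral_theorem]
    norm_num [Complex.coe_smul]
  have hd : diagonal (RCLike.ofReal ∘ hρ.1.eigenvalues) - (c:ℂ) • (1 : Matrix (Fin r) (Fin r) ℂ)
      = diagonal (fun j => ((hρ.1.eigenvalues j - c : ℝ) : ℂ)) := by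
    ext j k
    by_cases h : j = k <;> simp [h, diagonal, Matrix.one_apply, Matrix.sub_apply, sub_eq_add_neg]
  rw [key, hd]
  exact (Matrix.posSemidef_diagonal_iff.mpr (fun j => by
    simpa using Complex.zero_le_real.mpr (sub_nonneg.mpr (hc j)))).mul_mul_conjTranspose_same V

private lemma aux_smul_sub_posSemidef {r : ℕ} {ρ : Matrix (Fin r) (Fin r) ℂ} (hρ : ρ.PosDef)
    {c : ℝ} (hc : ∀ j, hρ.1.eigenvalues j ≤ c) : (c • 1 - ρ).PosSemidef := by
  set V : Matrix (Fin r) (Fin r) ℂ := (hρ.1.eigenvectorUnitary : Matrix (Fin r) (Fin r) ℂ) with hV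
  have hVs : V * star V = 1 := (Matrix.mem_unitaryGroup_iff).mp hρ.1.eigenvectorUnitary.2
  have key : c • 1 - ρ = V * ((c:ℂ) • 1 - diagonal (RCLike.ofReal ∘ hρ.1.eigenvalues)) * star V := by
    rw [Matrix.mul_sub, Matrix.sub_mul, Matrix.mul_smul, mul_one, Matrix.smul_mul, hVs]
    rw [hV, ← Unitary.conjStarAlgAut_apply (S := ℂ), ← hρ.1.spectral_theorem]
    norm_num [Complex.coe_smul]
  have hd : (c:ℂ) • (1 : Matrix (Fin r) (Fin r) ℂ) - diagonal (RCLike.ofReal ∘ hρ.1.eigenvalues)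
      = diagonal (fun j => ((c - hρ.1.eigenvalues j : ℝ) : ℂ)) := by
    ext j k
    by_cases h : j = k <;> simp [h, diagonal, Matrix.one_apply, Matrix.sub_apply, sub_eq_add_neg]
  rw [key, hd]
  exact (Matrix.posSemidef_diagonal_iff.mpr (fun j => by
    simpa using Complex.zero_le_real.mpr (sub_nonneg.mpr (hc j)))).mul_mul_conjTranspose_same V

/-- If `ρ` is a positive definite density matrix with smallest eigenvalue `λ₁` and largest
eigenvalue `λ_r`, and `X` is Hermitian with all eigenvalues `≥ −1` and `tr(ρX) ≤ 0`, then
every eigenvalue of `X` (in particular the largest, `x_r`) is `≤ (r−1)·λ_r/λ₁`. -/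
theorem stmt_2 {r : ℕ} (hr : 0 < r) (ρ X : Matrix (Fin r) (Fin r) ℂ)
    (hρ : ρ.PosDef) (htrρ : ρ.trace = 1) (hX : X.IsHermitian)
    (hx1 : ∀ i, -1 ≤ hX.eigenvalues i)
    (htr : ((ρ * X).trace).re ≤ 0) :
    haveI : Nonempty (Fin r) := Fin.pos_iff_nonempty.mp hr
    ∀ i, hX.eigenvalues i ≤
      ((r : ℝ) - 1) * (⨆ j, hρ.1.eigenvalues j) / (⨅ j, hρ.1.eigenvalues j) := by
  haveI : Nonempty (Fin r) := Fin.pos_iff_nonempty.mp hr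
  intro i
  set lo : ℝ := ⨅ j, hρ.1.eigenvalues j with hlo_def
  set hi : ℝ := ⨆ j, hρ.1.eigenvalues j with hhi_def
  have hbddA : BddAbove (Set.range hρ.1.eigenvalues) := (Set.finite_range _).bddAbove
  have hbddB : BddBelow (Set.range hρ.1.eigenvalues) := (Set.finite_range _).bddBelow
  have hhi_le : ∀ j, hρ.1.eigenvalues j ≤ hi := fun j => le_ciSup hbddA j
  have hlo_le : ∀ j, lo ≤ hρ.1.eigenvalues j := fun j => ciInf_le hbddB j
  have hlo_pos : 0 < lo := by
    obtain ⟨x, hx⟩ := Finite.exists_min hρ.1.eigenvalues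
    have : lo = hρ.1.eigenvalues x := le_antisymm (hlo_le x) (le_ciInf hx)
    rw [this]; exact hρ.eigenvalues_pos x
  have hhi_pos : 0 < hi := hlo_pos.trans_le ((hlo_le (Classical.arbitrary _)).trans
    (hhi_le (Classical.arbitrary _)))
  -- set up conjugated matrix
  set U : Matrix (Fin r) (Fin r) ℂ := (hX.eigenvectorUnitary : Matrix (Fin r) (Fin r) ℂ) with hU
  have hUs : (star U) * U = 1 := (Matrix.mem_unitaryGroup_iff').mp hX.eigenvectorUnitary.2
  set σ : Matrix (Fin r) (Fin r) ℂ := star U * ρ * U with hσ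
  set μ : Fin r → ℝ := fun j => (σ j j).re with hμ
  set x : Fin r → ℝ := hX.eigenvalues with hx
  -- bounds on μ
  have hμlo : ∀ j, lo ≤ μ j := by
    intro j
    have h1 : (star U * (ρ - lo • 1) * U).PosSemidef :=
      (aux_sub_smul_posSemidef hρ hlo_le).conjTranspose_mul_mul_same U
    have h2 : star U * (ρ - lo • 1) * U = σ - lo • 1 := by
      rw [Matrix.mul_sub, Matrix.sub_mul, Matrix.mul_smul, Matrix.smul_mul, mul_one, hUs]
    rw [h2] at h1
    have := aux_diag_re_nonneg h1 j
    simp only [Matrix.sub_apply, Matrix.smul_apply, Matrix.one_apply_eq, Complex.sub_re,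
      Complex.real_smul, Complex.ofReal_mul, Complex.mul_re, Complex.one_re, Complex.one_im,
      Complex.ofReal_re, Complex.ofReal_im, mul_one, mul_zero, sub_zero, zero_mul] at this
    linarith
  have hμhi : ∀ j, μ j ≤ hi := by
    intro j
    have h1 : (star U * (hi • 1 - ρ) * U).PosSemidef :=
      (aux_smul_sub_posSemidef hρ hhi_le).conjTranspose_mul_mul_same U
    have h2 : star U * (hi • 1 - ρ) * U = hi • 1 - σ := by
      rw [Matrix.mul_sub, Matrix.sub_mul, Matrix.mul_smul, Matrix.smul_mul, mul_one, hUs]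
    rw [h2] at h1
    have := aux_diag_re_nonneg h1 j
    simp only [Matrix.sub_apply, Matrix.smul_apply, Matrix.one_apply_eq, Complex.sub_re,
      Complex.real_smul, Complex.ofReal_mul, Complex.mul_re, Complex.one_re, Complex.one_im,
      Complex.ofReal_re, Complex.ofReal_im, mul_one, mul_zero, sub_zero, zero_mul] at this
    linarith
  -- trace identity
  have htrace : ((ρ * X).trace).re = ∑ j, μ j * x j := by
    have h1 : (ρ * X).trace = (σ * diagonal (RCLike.ofReal ∘ hX.eigenvalues)).trace := by
      conv_lhs => rw [hX.spectral_theorem]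
      rw [hσ, hU]
      rw [Unitary.conjStarAlgAut_apply]
      rw [show ρ * ((hX.eigenvectorUnitary : Matrix (Fin r) (Fin r) ℂ) *
          diagonal (RCLike.ofReal ∘ hX.eigenvalues) * star (hX.eigenvectorUnitary : Matrix (Fin r) (Fin r) ℂ))
        = (ρ * (hX.eigenvectorUnitary : Matrix (Fin r) (Fin r) ℂ) *
          diagonal (RCLike.ofReal ∘ hX.eigenvalues)) * star (hX.eigenvectorUnitary : Matrix (Fin r) (Fin r) ℂ) by
        simp only [Matrix.mul_assoc]]
      rw [Matrix.trace_mul_comm]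
      simp only [← Matrix.mul_assoc]
    rw [h1]
    simp only [Matrix.trace, Matrix.diag, Matrix.mul_diagonal, Complex.re_sum]
    refine Finset.sum_congr rfl fun j _ => ?_
    simp [Complex.mul_re]
    rfl
  have hsum : ∑ j, μ j * x j ≤ 0 := htrace ▸ htr
  -- final arithmetic
  have hRHS0 : 0 ≤ ((r : ℝ) - 1) * hi / lo :=
    div_nonneg (mul_nonneg (sub_nonneg.mpr (by exact_mod_cast hr : (1:ℝ) ≤ (r:ℝ)))
      hhi_pos.le) hlo_pos.le
  by_cases hxi : x i ≤ 0
  · exact hxi.trans hRHS0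
  push_neg at hxi
  have hsplit : μ i * x i + ∑ j ∈ Finset.univ.erase i, μ j * x j = ∑ j, μ j * x j :=
    Finset.add_sum_erase _ (fun j => μ j * x j) (Finset.mem_univ i)
  have hbound : ∀ j ∈ Finset.univ.erase i, -(μ j * x j) ≤ hi := by
    intro j _
    have h0 : 0 ≤ μ j := hlo_pos.le.trans (hμlo j)
    have : μ j * (-x j) ≤ μ j * 1 := mul_le_mul_of_nonneg_left (by linarith [hx1 j]) h0
    calc -(μ j * x j) = μ j * (-x j) := by ring
      _ ≤ μ j * 1 := this
      _ = μ j := mul_one _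
      _ ≤ hi := hμhi j
  have hkey : μ i * x i ≤ ((r : ℝ) - 1) * hi := by
    have h1 : μ i * x i ≤ ∑ j ∈ Finset.univ.erase i, -(μ j * x j) := by
      rw [Finset.sum_neg_distrib]
      linarith [hsplit, hsum]
    have h2 : ∑ j ∈ Finset.univ.erase i, -(μ j * x j)
        ≤ (Finset.univ.erase i).card • hi := Finset.sum_le_card_nsmul _ _ _ hbound
    have hcard : (Finset.univ.erase i).card = r - 1 := by
      rw [Finset.card_erase_of_mem (Finset.mem_univ i), Finset.card_univ, Fintype.card_fin]
    rw [hcard, nsmul_eq_mul, Nat.cast_sub hr, Nat.cast_one] at h2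
    linarith
  rw [div_eq_mul_inv]
  have : lo * x i ≤ μ i * x i := mul_le_mul_of_nonneg_right (hμlo i) hxi.le
  calc x i = lo * x i * lo⁻¹ := by field_simp
    _ ≤ ((r : ℝ) - 1) * hi * lo⁻¹ := by
        apply mul_le_mul_of_nonneg_right _ (inv_nonneg.mpr hlo_pos.le)
        linarith
end

section
/- Given a positive definite density matrix ρ with minimal eigenvalue λ_1 > 0 on an r-dimensional Hilbert space, the set of Hermitian operators {X : E([ψ]) + tr([ψ]X) ≥ 0 ∀ pure [ψ], and tr(ρX) ≤ 0} is a compact convex subset of the Hermitian operators, assuming 0 ≤ E ≤ 1. -/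
open Matrix BigOperators ComplexOrder

noncomputable def pureProj {n : ℕ} (ψ : Fin n → ℂ) : Matrix (Fin n) (Fin n) ℂ :=
  Matrix.vecMulVec ψ (star ψ)

lemma trace_pureProj {n : ℕ} (ψ : Fin n → ℂ) (X : Matrix (Fin n) (Fin n) ℂ) :
    (pureProj ψ * X).trace = star ψ ⬝ᵥ (X *ᵥ ψ) := by
  simp only [pureProj, Matrix.trace, Matrix.diag, Matrix.mul_apply, vecMulVec_apply,
    dotProduct, mulVec, Pi.star_apply, Finset.mul_sum]
  rw [Finset.sum_comm]
  congr 1; ext k; congr 1; ext i; ring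

lemma quad_single {n : ℕ} (A : Matrix (Fin n) (Fin n) ℂ) (i j : Fin n) (a b : ℂ) :
    star (Pi.single i a) ⬝ᵥ (A *ᵥ Pi.single j b) = star a * (A i j * b) := by
  simp [mulVec_single, dotProduct, Pi.single_apply, apply_ite, Finset.sum_ite_eq']

lemma psd_diag {n : ℕ} {A : Matrix (Fin n) (Fin n) ℂ} (hA : A.PosSemidef) (i : Fin n) :
    0 ≤ A i i := by
  have := hA.dotProduct_mulVec_nonneg (Pi.single i 1)
  rwa [quad_single, star_one, one_mul, mul_one] at this

lemma psd_offdiag {n : ℕ} {A : Matrix (Fin n) (Fin n) ℂ} (hA : A.PosSemidef) (i j : Fin n) : 2 * ‖A i j‖ ≤ (A i i).re + (A j j).re := by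
  have hdi : 0 ≤ (A i i).re := (Complex.le_def.1 (psd_diag hA i)).1
  have hdj : 0 ≤ (A j j).re := (Complex.le_def.1 (psd_diag hA j)).1
  rcases eq_or_ne (A i j) 0 with h0 | h0
  · simp [h0]; linarith
  · set z := A i j with hz
    have haz : (0:ℝ) < ‖z‖ := norm_pos_iff.mpr h0
    have hazne : (‖z‖ : ℂ) ≠ 0 := by
      simpa using ne_of_gt haz
    set c : ℂ := -z / ↑(‖z‖) with hc
    have hji : A j i = star z := (hA.1.apply j i).symm
    have hq := hA.dotProduct_mulVec_nonneg (Pi.single i c + Pi.single j 1)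
    rw [mulVec_add, star_add, add_dotProduct, dotProduct_add, dotProduct_add,
      quad_single, quad_single, quad_single, quad_single] at hq
    have hsz : (starRingEnd ℂ) z * z = ((‖z‖ : ℝ) : ℂ)^2 := by
      rw [mul_comm, Complex.mul_conj, ← Complex.ofReal_pow, Complex.normSq_eq_norm_sq]
    have key : star c * (A i i * c) + star c * (z * 1) + (star 1 * (A j i * c)
        + star 1 * (A j j * 1)) = A i i + A j j - 2 * ((‖z‖ : ℝ) : ℂ) := by
      rw [hji, hc]
      rw [star_div₀, star_neg, Complex.star_def, Complex.conj_ofReal, ← Complex.star_def]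
      simp only [Complex.star_def, map_one, one_mul, mul_one, map_neg]
      linear_combination (norm := skip) (A i i / ((‖z‖:ℝ):ℂ)^2 - 2/((‖z‖:ℝ):ℂ)) * hsz
      field_simp
      ring
    rw [key] at hq
    have := (Complex.le_def.1 hq).1
    simp only [Complex.sub_re, Complex.add_re, Complex.mul_re, Complex.ofReal_re,
      Complex.ofReal_im] at this
    norm_num at this
    linarith

lemma psd_trace_re_nonneg {n : ℕ} {A : Matrix (Fin n) (Fin n) ℂ} (hA : A.PosSemidef) :
    0 ≤ (A.trace).re := by
  have h : (0:ℂ) ≤ A.trace := Finset.sum_nonneg fun i _ => psd_diag hA i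
  exact (Complex.le_def.1 h).1

lemma psd_trace_mul_nonneg {n : ℕ} {P A : Matrix (Fin n) (Fin n) ℂ}
    (hP : P.PosSemidef) (hA : A.PosSemidef) : 0 ≤ ((P * A).trace).re := by
  obtain ⟨B, hB⟩ : ∃ B : Matrix (Fin n) (Fin n) ℂ, A = Bᴴ * B := by
    open scoped MatrixOrder in
    exact ⟨CFC.sqrt A, by rw [(CFC.sqrt_nonneg A).posSemidef.1.eq, CFC.sqrt_mul_sqrt_self A hA.nonneg]⟩
  have h1 : (P * A).trace = (B * P * Bᴴ).trace := by
    rw [hB, trace_mul_comm, mul_assoc, mul_assoc, trace_mul_comm, mul_assoc]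
  rw [h1]
  exact psd_trace_re_nonneg (hP.mul_mul_conjTranspose_same B)

lemma sub_smul_one_psd {n : ℕ} {ρ : Matrix (Fin n) (Fin n) ℂ} (hρ : ρ.PosDef) (lam : ℝ)
    (hlam : ∀ i, lam ≤ hρ.1.eigenvalues i) : (ρ - (lam:ℂ) • 1).PosSemidef := by
  have spec := hρ.1.spectral_theorem
  rw [Unitary.conjStarAlgAut_apply] at spec
  set U : Matrix (Fin n) (Fin n) ℂ := (hρ.1.eigenvectorUnitary : Matrix (Fin n) (Fin n) ℂ)
  have hUU : U * star U = 1 := Matrix.mem_unitaryGroup_iff.mp hρ.1.eigenvectorUnitary.2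
  have key : ρ - (lam:ℂ) • 1 =
      U * Matrix.diagonal (fun i => ((hρ.1.eigenvalues i - lam : ℝ) : ℂ)) * star U := by
    have h2 : Matrix.diagonal (fun i => ((hρ.1.eigenvalues i - lam : ℝ) : ℂ)) =
        Matrix.diagonal (RCLike.ofReal ∘ hρ.1.eigenvalues) - (lam:ℂ) • 1 := by
      rw [smul_one_eq_diagonal, Matrix.diagonal_sub]
      congr 1; funext i; simp [Function.comp]
    rw [h2, Matrix.mul_sub, Matrix.sub_mul, Matrix.mul_smul, Matrix.smul_mul, mul_one, hUU,
      ← spec]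
  have hd : (0 : Fin n → ℂ) ≤ fun i => ((hρ.1.eigenvalues i - lam : ℝ) : ℂ) :=
    Pi.le_def.2 fun i => Complex.zero_le_real.2 (sub_nonneg.2 (hlam i))
  rw [key, Matrix.star_eq_conjTranspose]
  exact (Matrix.PosSemidef.diagonal hd).mul_mul_conjTranspose_same U

lemma herm_quad_star {n : ℕ} {M : Matrix (Fin n) (Fin n) ℂ} (hM : M.IsHermitian)
    (x : Fin n → ℂ) : star (star x ⬝ᵥ (M *ᵥ x)) = star x ⬝ᵥ (M *ᵥ x) := by
  conv_lhs => rw [Matrix.star_dotProduct, star_star]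
  rw [Matrix.star_mulVec, ← Matrix.dotProduct_mulVec, hM.eq]

lemma feas_psd {r : ℕ} (E : (Fin r → ℂ) → ℝ)
    (hE : ∀ ψ : Fin r → ℂ, star ψ ⬝ᵥ ψ = 1 → E ψ ≤ 1)
    {X : Matrix (Fin r) (Fin r) ℂ} (hherm : X.IsHermitian)
    (hfeas : ∀ ψ : Fin r → ℂ, star ψ ⬝ᵥ ψ = 1 → 0 ≤ E ψ + ((pureProj ψ * X).trace).re) :
    (X + 1).PosSemidef := by
  have hherm1 : (X + 1).IsHermitian := hherm.add Matrix.isHermitian_one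
  refine PosSemidef.of_dotProduct_mulVec_nonneg hherm1 fun x => ?_
  rw [Complex.le_def]
  constructor
  · -- real part
    rcases eq_or_ne x 0 with rfl | hx0
    · simp
    · -- normalize
      have hc : (0:ℂ) ≤ star x ⬝ᵥ x := dotProduct_star_self_nonneg x
      set cr : ℝ := (star x ⬝ᵥ x).re with hcr
      have him0 : (star x ⬝ᵥ x).im = 0 := by
        have := (Complex.le_def.1 hc).2; simpa using this.symm
      have hceq : star x ⬝ᵥ x = (cr : ℂ) := Complex.ext (by simp [hcr]) (by simp [him0])
      have hcrpos : 0 < cr := by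
        rcases lt_or_eq_of_le (show (0:ℝ) ≤ cr by simpa using (Complex.le_def.1 hc).1) with h | h
        · exact h
        · exact absurd (dotProduct_star_self_eq_zero.mp
            (by rw [hceq, ← h]; simp)) hx0
      set s : ℝ := Real.sqrt cr with hs
      have hspos : 0 < s := Real.sqrt_pos.2 hcrpos
      have hss : s * s = cr := Real.mul_self_sqrt hcrpos.le
      set ψ : Fin r → ℂ := (s⁻¹ : ℂ) • x with hψ
      have hstarψ : star ψ = (s⁻¹ : ℂ) • star x := by
        rw [hψ, star_smul]
        congr 1
        simp [Complex.star_def, Complex.conj_ofReal]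
      have hunit : star ψ ⬝ᵥ ψ = 1 := by
        rw [hψ, hstarψ, smul_dotProduct, dotProduct_smul, hceq, smul_eq_mul,
          smul_eq_mul]
        rw [← Complex.ofReal_inv, ← Complex.ofReal_mul, ← Complex.ofReal_mul]
        rw [show s⁻¹ * (s⁻¹ * cr) = cr / (s*s) by field_simp, hss]
        simp [ne_of_gt hcrpos]
      have hquad : (pureProj ψ * X).trace = ((s⁻¹*s⁻¹ : ℝ) : ℂ) * (star x ⬝ᵥ (X *ᵥ x)) := by
        rw [trace_pureProj, hψ, hstarψ, Matrix.mulVec_smul, smul_dotProduct,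
          dotProduct_smul, smul_eq_mul, smul_eq_mul]
        push_cast
        ring
      have h2 := hfeas ψ hunit
      have h1 := hE ψ hunit
      rw [hquad] at h2
      have hre : (((s⁻¹*s⁻¹ : ℝ) : ℂ) * (star x ⬝ᵥ (X *ᵥ x))).re
          = (s⁻¹*s⁻¹) * (star x ⬝ᵥ (X *ᵥ x)).re := by
        simp [Complex.mul_re]
      rw [hre] at h2
      have hXq : -cr ≤ (star x ⬝ᵥ (X *ᵥ x)).re := by
        have hinv : s⁻¹ * s⁻¹ = cr⁻¹ := by
          field_simp
          rw [← hss]; ring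
        rw [hinv] at h2
        have : -(1:ℝ) ≤ cr⁻¹ * (star x ⬝ᵥ (X *ᵥ x)).re := by linarith
        calc -cr = cr * (-1) := by ring
        _ ≤ cr * (cr⁻¹ * (star x ⬝ᵥ (X *ᵥ x)).re) := by
            exact mul_le_mul_of_nonneg_left this hcrpos.le
        _ = (star x ⬝ᵥ (X *ᵥ x)).re := by field_simp
      have hsplit : star x ⬝ᵥ ((X + 1) *ᵥ x) = star x ⬝ᵥ (X *ᵥ x) + star x ⬝ᵥ x := by
        rw [Matrix.add_mulVec, dotProduct_add, Matrix.one_mulVec]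
      rw [hsplit, Complex.add_re, hceq]
      simp only [Complex.ofReal_re, Complex.zero_re]
      linarith
  · -- imaginary part: self-adjoint
    have := herm_quad_star hherm1 x
    have him := congrArg Complex.im this
    simp only [Complex.star_def, Complex.conj_im] at him
    simp
    linarith

/-- For a positive definite density matrix `ρ` and `0 ≤ E ≤ 1` on pure states, the set of
Hermitian `X` that are dual feasible (`E([ψ]) + tr([ψ]X) ≥ 0` for all pure `[ψ]`) and
satisfy `tr(ρX) ≤ 0` is a compact convex subset of the Hermitian operators. -/
theorem stmt_19 {r : ℕ} (hr : 0 < r) (ρ : Matrix (Fin r) (Fin r) ℂ)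
    (hρ : ρ.PosDef) (htrρ : ρ.trace = 1) (E : (Fin r → ℂ) → ℝ)
    (hE : ∀ ψ : Fin r → ℂ, star ψ ⬝ᵥ ψ = 1 → 0 ≤ E ψ ∧ E ψ ≤ 1) :
    IsCompact {X : Matrix (Fin r) (Fin r) ℂ | X.IsHermitian ∧
        (∀ ψ : Fin r → ℂ, star ψ ⬝ᵥ ψ = 1 → 0 ≤ E ψ + ((pureProj ψ * X).trace).re) ∧
        ((ρ * X).trace).re ≤ 0} ∧
    Convex ℝ {X : Matrix (Fin r) (Fin r) ℂ | X.IsHermitian ∧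
        (∀ ψ : Fin r → ℂ, star ψ ⬝ᵥ ψ = 1 → 0 ≤ E ψ + ((pureProj ψ * X).trace).re) ∧
        ((ρ * X).trace).re ≤ 0} := by
  set S : Set (Matrix (Fin r) (Fin r) ℂ) := {X : Matrix (Fin r) (Fin r) ℂ | X.IsHermitian ∧
        (∀ ψ : Fin r → ℂ, star ψ ⬝ᵥ ψ = 1 → 0 ≤ E ψ + ((pureProj ψ * X).trace).re) ∧
        ((ρ * X).trace).re ≤ 0} with hS
  have hlin : ∀ (M X Y : Matrix (Fin r) (Fin r) ℂ) (a b : ℝ),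
      ((M * (a • X + b • Y)).trace).re
        = a * ((M * X).trace).re + b * ((M * Y).trace).re := by
    intro M X Y a b
    rw [Matrix.mul_add, Matrix.trace_add, Complex.add_re, Matrix.mul_smul, Matrix.mul_smul,
      Matrix.trace_smul, Matrix.trace_smul]
    simp [Complex.real_smul, Complex.mul_re]
  have hconv : Convex ℝ S := by
    intro X hX Y hY a b ha hb hab
    obtain ⟨hX1, hX2, hX3⟩ := hX
    obtain ⟨hY1, hY2, hY3⟩ := hY
    refine ⟨?_, ?_, ?_⟩
    · show (a • X + b • Y)ᴴ = a • X + b • Y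
      rw [Matrix.conjTranspose_add, Matrix.conjTranspose_smul, Matrix.conjTranspose_smul,
        star_trivial, star_trivial, hX1.eq, hY1.eq]
    · intro ψ hψ
      rw [hlin]
      have heq : a * E ψ + b * E ψ = E ψ := by rw [← add_mul, hab, one_mul]
      linarith [mul_nonneg ha (hX2 ψ hψ), mul_nonneg hb (hY2 ψ hψ)]
    · rw [hlin]
      linarith [mul_nonneg ha (neg_nonneg.2 hX3), mul_nonneg hb (neg_nonneg.2 hY3)]
  refine ⟨?_, hconv⟩
  -- compactness
  haveI : Nonempty (Fin r) := Fin.pos_iff_nonempty.mp hr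
  letI : NormedAddCommGroup (Matrix (Fin r) (Fin r) ℂ) := Matrix.normedAddCommGroup
  letI : NormedSpace ℂ (Matrix (Fin r) (Fin r) ℂ) := Matrix.normedSpace
  haveI : ProperSpace (Matrix (Fin r) (Fin r) ℂ) := FiniteDimensional.proper ℂ _
  set lam : ℝ := Finset.univ.inf' Finset.univ_nonempty hρ.1.eigenvalues with hlamdef
  have hlam_le : ∀ i, lam ≤ hρ.1.eigenvalues i := fun i => Finset.inf'_le _ (Finset.mem_univ i)
  have hlampos : 0 < lam := by
    obtain ⟨i, _, hi⟩ := Finset.exists_mem_eq_inf' Finset.univ_nonempty hρ.1.eigenvalues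
    rw [hlamdef, hi]
    exact hρ.eigenvalues_pos i
  have hPsub := sub_smul_one_psd hρ lam hlam_le
  have hsubset : S ⊆ Metric.closedBall 0 (lam⁻¹ + 1) := by
    intro X hX
    obtain ⟨hherm, hfeas, htr⟩ := hX
    have hA : (X + 1).PosSemidef := feas_psd E (fun ψ h => (hE ψ h).2) hherm hfeas
    have h1 : ((ρ * (X + 1)).trace).re ≤ 1 := by
      rw [Matrix.mul_add, Matrix.trace_add, Complex.add_re, mul_one, htrρ]
      simp only [Complex.one_re]
      linarith
    have h3 : ((ρ - (lam:ℂ) • 1) * (X + 1)).trace.re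
        = ((ρ * (X + 1)).trace).re - lam * ((X + 1).trace).re := by
      rw [Matrix.sub_mul, Matrix.trace_sub, Complex.sub_re, Matrix.smul_mul, one_mul,
        Matrix.trace_smul]
      simp [smul_eq_mul, Complex.mul_re]
    have h2 : 0 ≤ ((ρ - (lam:ℂ) • 1) * (X + 1)).trace.re := psd_trace_mul_nonneg hPsub hA
    have htrace : ((X + 1).trace).re ≤ lam⁻¹ := by
      have hmul : lam * ((X + 1).trace).re ≤ 1 := by linarith
      calc ((X + 1).trace).re = lam⁻¹ * (lam * ((X + 1).trace).re) := by field_simp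
      _ ≤ lam⁻¹ * 1 := mul_le_mul_of_nonneg_left hmul (inv_nonneg.2 hlampos.le)
      _ = lam⁻¹ := mul_one _
    have htrsum : ((X + 1).trace).re = ∑ k, ((X + 1) k k).re := by
      rw [Matrix.trace]
      exact Complex.re_sum _ _
    have hdiag : ∀ i, ((X + 1) i i).re ≤ lam⁻¹ := by
      intro i
      refine le_trans ?_ htrace
      rw [htrsum]
      exact Finset.single_le_sum (fun k _ => (Complex.le_def.1 (psd_diag hA k)).1)
        (Finset.mem_univ i)
    have hXentry : ∀ i j, ‖X i j‖ ≤ lam⁻¹ + 1 := by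
      intro i j
      have hoff := psd_offdiag hA i j
      have habs : ‖(X + 1) i j‖ ≤ lam⁻¹ := by
        have := hdiag i; have := hdiag j; linarith
      have hXij : X i j = (X + 1) i j - (1 : Matrix (Fin r) (Fin r) ℂ) i j := by
        simp [Matrix.add_apply]
      have hone : ‖(1 : Matrix (Fin r) (Fin r) ℂ) i j‖ ≤ 1 := by
        rw [Matrix.one_apply]
        split <;> simp
      calc ‖X i j‖ = ‖(X + 1) i j - (1 : Matrix (Fin r) (Fin r) ℂ) i j‖ := by rw [← hXij]
      _ ≤ ‖(X + 1) i j‖ + ‖(1 : Matrix (Fin r) (Fin r) ℂ) i j‖ := norm_sub_le _ _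
      _ ≤ lam⁻¹ + 1 := add_le_add habs hone
    rw [Metric.mem_closedBall, dist_zero_right]
    exact (Matrix.norm_le_iff (by positivity)).2 hXentry
  have hclosed : IsClosed S := by
    have hSeq : S = {X : Matrix (Fin r) (Fin r) ℂ | Xᴴ = X} ∩
        ((⋂ ψ : Fin r → ℂ, ⋂ _ : star ψ ⬝ᵥ ψ = 1,
          {X : Matrix (Fin r) (Fin r) ℂ | 0 ≤ E ψ + ((pureProj ψ * X).trace).re}) ∩
        {X : Matrix (Fin r) (Fin r) ℂ | ((ρ * X).trace).re ≤ 0}) := by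
      ext X
      simp only [hS, Set.mem_setOf_eq, Set.mem_inter_iff, Set.mem_iInter, Matrix.IsHermitian]
      all_goals tauto
    rw [hSeq]
    refine IsClosed.inter (isClosed_eq (continuous_id.matrix_conjTranspose) continuous_id)
      (IsClosed.inter ?_ ?_)
    · refine isClosed_iInter fun ψ => isClosed_iInter fun _ => ?_
      exact isClosed_le continuous_const (continuous_const.add
        (Complex.continuous_re.comp ((continuous_const.matrix_mul continuous_id).matrix_trace)))
    · exact isClosed_le
        (Complex.continuous_re.comp ((continuous_const.matrix_mul continuous_id).matrix_trace))
        continuous_const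
  exact (isCompact_closedBall 0 (lam⁻¹ + 1)).of_isClosed_subset hclosed hsubset
end
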